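/- arXiv:2310.09677 — 3 statements merged into one kernel-verified Lean document; each statement's English description precedes it below -/
import Mathlib

section
/- Let Λ be an m×n real matrix, R a p×n real matrix, S a q×m real matrix and Q a k×n real matrix, with ker R ∩ ker(S Λ) = {0}. Fix ε > 0, η > 0, y ∈ ℝᵐ, and let K = {f ∈ ℝⁿ : ‖R f‖ ≤ ε and ‖S (y − Λ f)‖ ≤ η}. Let c, d ≥ 0 and t ∈ ℝ satisfy the feasibility constraints: c RᵀR + d Λᵀ Sᵀ S Λ − QᵀQ is positive semidefinite, and the (n+1)×(n+1) block matrix [[c RᵀR + d Λᵀ Sᵀ S Λ, d Λᵀ Sᵀ S y], [d yᵀ Sᵀ S Λ, t]] is positive semidefinite. If f₀ ∈ ℝⁿ satisfies the normal equation c RᵀR f₀ + d Λᵀ Sᵀ S (Λ f₀ − y) = 0 (equivalently, f₀ minimizes f ↦ c ‖R f‖² + d ‖S(y − Λ f)‖²), then sup_{f ∈ K} ‖Q f − Q f₀‖² ≤ c ε² + d η² − d ‖S y‖² + t. -/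
open Matrix

/-- Euclidean norm on `Fin k → ℝ`. -/
noncomputable def eNorm {k : ℕ} (x : Fin k → ℝ) : ℝ := Real.sqrt (∑ i, x i ^ 2)

lemma eNorm_nonneg {k : ℕ} (x : Fin k → ℝ) : 0 ≤ eNorm x := Real.sqrt_nonneg _

lemma eNorm_sq {k : ℕ} (x : Fin k → ℝ) : eNorm x ^ 2 = x ⬝ᵥ x := by
  rw [eNorm, Real.sq_sqrt (Finset.sum_nonneg fun i _ => sq_nonneg _)]
  simp [dotProduct, sq]

lemma tdot {a b : Type*} [Fintype a] [Fintype b] (M : Matrix a b ℝ) (u : b → ℝ) (v : a → ℝ) :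
    u ⬝ᵥ (Mᵀ *ᵥ v) = (M *ᵥ u) ⬝ᵥ v := by
  rw [dotProduct_mulVec, vecMul_transpose]

lemma colmv {n : ℕ} (b : Fin n → ℝ) (w : Unit → ℝ) :
    Matrix.replicateCol Unit b *ᵥ w = w () • b := by
  ext i; simp [Matrix.mulVec, dotProduct, mul_comm]

lemma rowmv {n : ℕ} (b v : Fin n → ℝ) :
    Matrix.replicateRow Unit b *ᵥ v = fun _ => b ⬝ᵥ v := by
  ext i; simp [Matrix.mulVec, dotProduct]

lemma ofmv (t : ℝ) (w : Unit → ℝ) :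
    (Matrix.of fun (_ _ : Unit) => t) *ᵥ w = fun _ => t * w () := by
  ext i; simp [Matrix.mulVec, dotProduct]

lemma unitdot (a b : Unit → ℝ) : a ⬝ᵥ b = a () * b () := by
  simp [dotProduct]

theorem sup_error_le_SDP_value {m n p q k : ℕ}
    (Λ : Matrix (Fin m) (Fin n) ℝ) (R : Matrix (Fin p) (Fin n) ℝ)
    (S : Matrix (Fin q) (Fin m) ℝ) (Q : Matrix (Fin k) (Fin n) ℝ)
    (hker : ∀ f : Fin n → ℝ, R *ᵥ f = 0 → (S * Λ) *ᵥ f = 0 → f = 0)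
    (ε η : ℝ) (hε : 0 < ε) (hη : 0 < η) (y : Fin m → ℝ)
    (c d t : ℝ) (hc : 0 ≤ c) (hd : 0 ≤ d)
    (hfeas1 : (c • (Rᵀ * R) + d • (Λᵀ * Sᵀ * S * Λ) - Qᵀ * Q).PosSemidef)
    (hfeas2 : (Matrix.fromBlocks (c • (Rᵀ * R) + d • (Λᵀ * Sᵀ * S * Λ))
        (Matrix.replicateCol Unit (d • ((Λᵀ * Sᵀ * S) *ᵥ y)))
        (Matrix.replicateRow Unit (d • ((Λᵀ * Sᵀ * S) *ᵥ y)))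
        (Matrix.of fun _ _ => t)).PosSemidef)
    (f₀ : Fin n → ℝ)
    (hf₀ : c • ((Rᵀ * R) *ᵥ f₀) + d • ((Λᵀ * Sᵀ * S) *ᵥ (Λ *ᵥ f₀ - y)) = 0) :
    ∀ f : Fin n → ℝ, eNorm (R *ᵥ f) ≤ ε → eNorm (S *ᵥ (y - Λ *ᵥ f)) ≤ η →
      eNorm (Q *ᵥ f - Q *ᵥ f₀) ^ 2 ≤
        c * ε ^ 2 + d * η ^ 2 - d * eNorm (S *ᵥ y) ^ 2 + t := by
  intro f hRf hSf
  have hRf2 : (R *ᵥ f) ⬝ᵥ (R *ᵥ f) ≤ ε ^ 2 := by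
    rw [← eNorm_sq]
    exact pow_le_pow_left₀ (eNorm_nonneg _) hRf 2
  have hSf2 : (S *ᵥ (y - Λ *ᵥ f)) ⬝ᵥ (S *ᵥ (y - Λ *ᵥ f)) ≤ η ^ 2 := by
    rw [← eNorm_sq]
    exact pow_le_pow_left₀ (eNorm_nonneg _) hSf 2
  have E1 := hfeas1.dotProduct_mulVec_nonneg (f - f₀)
  have E2 := hfeas2.dotProduct_mulVec_nonneg (Sum.elim (-f₀) (fun _ => (1 : ℝ)))
  rw [fromBlocks_mulVec] at E2
  simp only [star_trivial, Sum.elim_comp_inl, Sum.elim_comp_inr, colmv, rowmv, ofmv,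
    sumElim_dotProduct_sumElim, unitdot] at E2
  have E3 : f ⬝ᵥ (c • ((Rᵀ * R) *ᵥ f₀) + d • ((Λᵀ * Sᵀ * S) *ᵥ (Λ *ᵥ f₀ - y))) = 0 := by
    rw [hf₀]; simp
  have E4 : f₀ ⬝ᵥ (c • ((Rᵀ * R) *ᵥ f₀) + d • ((Λᵀ * Sᵀ * S) *ᵥ (Λ *ᵥ f₀ - y))) = 0 := by
    rw [hf₀]; simp
  rw [eNorm_sq, eNorm_sq]
  simp only [star_trivial, sub_mulVec, add_mulVec, smul_mulVec,
    ← mulVec_mulVec, mulVec_sub, mulVec_add, mulVec_neg, mulVec_smul,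
    dotProduct_add, add_dotProduct, tdot,
    dotProduct_sub, sub_dotProduct, dotProduct_smul, smul_dotProduct, Pi.smul_apply,
    dotProduct_neg, neg_dotProduct, smul_eq_mul, mul_one, one_mul, Pi.add_apply,
    dotProduct_comm] at E1 E2 E3 E4 hSf2 ⊢
  nlinarith [mul_le_mul_of_nonneg_left hRf2 hc, mul_le_mul_of_nonneg_left hSf2 hd, E1, E2, E3, E4]
end

section
/- Let P be an n×n real symmetric matrix with P² = P, let Λ be an m×n real matrix with Λ Λᵀ = I_m, and suppose ker P ∩ ker Λ = {0}. Fix ε > 0, η > 0 and y ∈ ℝᵐ. Suppose there exist c♯, d♯ ≥ 0 and vectors f♯, h♯ ∈ ℝⁿ such that: (a) c♯ P + d♯ ΛᵀΛ − I_n is positive semidefinite; (b') c♯ P f♯ + d♯ Λᵀ(Λ f♯ − y) = 0 and (c♯ P + d♯ ΛᵀΛ) h♯ = h♯; (c) ⟨P f♯, h♯⟩ = 0 and ⟨Λᵀ(Λ f♯ − y), h♯⟩ = 0; (d) ‖P f♯ + P h♯‖² = ε² and ‖Λ f♯ − y + Λ h♯‖² = η². Then the optimal value of the semidefinite program — minimize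 c ε² + d η² − d ‖y‖² + t over c, d ≥ 0, t ∈ ℝ subject to c P + d ΛᵀΛ − I_n positive semidefinite and the block matrix [[c P + d ΛᵀΛ, d Λᵀ y], [d yᵀ Λ, t]] positive semidefinite — equals ‖h♯‖², and this value is attained at (c♯, d♯, t♯) with t♯ = d♯ ⟨Λ f♯, y⟩. -/
open Matrix

/-- Euclidean inner product on `Fin k → ℝ`. -/
def eInner {k : ℕ} (x y : Fin k → ℝ) : ℝ := ∑ i, x i * y i

lemma eInner_eq {k : ℕ} (x y : Fin k → ℝ) : eInner x y = x ⬝ᵥ y := rfl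

lemma dot_transpose {a b : ℕ} (M : Matrix (Fin a) (Fin b) ℝ) (x : Fin b → ℝ) (v : Fin a → ℝ) :
    x ⬝ᵥ (Mᵀ *ᵥ v) = (M *ᵥ x) ⬝ᵥ v := by
  rw [mulVec_transpose, dotProduct_comm, ← dotProduct_mulVec, dotProduct_comm]

lemma block_extract {n : ℕ} (A : Matrix (Fin n) (Fin n) ℝ) (b : Fin n → ℝ) (t : ℝ)
    (h : (Matrix.fromBlocks A (Matrix.replicateCol Unit b) (Matrix.replicateRow Unit b)
      (Matrix.of fun _ _ => t)).PosSemidef) (x : Fin n → ℝ) :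
    0 ≤ x ⬝ᵥ (A *ᵥ x) - 2 * (b ⬝ᵥ x) + t := by
  have := h.dotProduct_mulVec_nonneg (Sum.elim x (fun _ => -1))
  simp only [star_trivial] at this
  have e : (Sum.elim x (fun _ => (-1:ℝ))) ⬝ᵥ
      ((Matrix.fromBlocks A (Matrix.replicateCol Unit b) (Matrix.replicateRow Unit b)
        (Matrix.of fun _ _ => t)) *ᵥ Sum.elim x (fun _ => -1))
      = x ⬝ᵥ (A *ᵥ x) - 2 * (b ⬝ᵥ x) + t := by
    rw [fromBlocks_mulVec, Sum.elim_comp_inl, Sum.elim_comp_inr, sumElim_dotProduct_sumElim]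
    simp [mulVec, dotProduct, Matrix.replicateCol, Matrix.replicateRow, Finset.sum_add_distrib, mul_add, add_mul,
      mul_comm]
    ring
  rw [e] at this
  exact this

lemma block_construct {n : ℕ} (A : Matrix (Fin n) (Fin n) ℝ) (hA : A.PosSemidef) (f : Fin n → ℝ) :
    (Matrix.fromBlocks A (Matrix.replicateCol Unit (A *ᵥ f)) (Matrix.replicateRow Unit (A *ᵥ f))
      (Matrix.of fun _ _ => f ⬝ᵥ (A *ᵥ f))).PosSemidef := by
  have hsym : Aᵀ = A := by
    have := hA.1
    simpa [Matrix.IsHermitian] using this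
  rw [posSemidef_iff_dotProduct_mulVec]
  constructor
  · show _ = _
    rw [conjTranspose_eq_transpose_of_trivial, fromBlocks_transpose, transpose_replicateCol, transpose_replicateRow,
      hsym]
    rfl
  · intro z
    have hz : Sum.elim (z ∘ Sum.inl) (z ∘ Sum.inr) = z := Sum.elim_comp_inl_inr z
    set u := z ∘ Sum.inl with hu
    set s := z (Sum.inr ()) with hs
    have key : star z ⬝ᵥ ((Matrix.fromBlocks A (Matrix.replicateCol Unit (A *ᵥ f)) (Matrix.replicateRow Unit (A *ᵥ f))
        (Matrix.of fun _ _ => f ⬝ᵥ (A *ᵥ f))) *ᵥ z) = (u + s • f) ⬝ᵥ (A *ᵥ (u + s • f)) := by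
      rw [star_trivial, ← hz, fromBlocks_mulVec, Sum.elim_comp_inl, Sum.elim_comp_inr,
        sumElim_dotProduct_sumElim]
      have hfAu : f ⬝ᵥ (A *ᵥ u) = (A *ᵥ f) ⬝ᵥ u := by
        rw [← hsym, dot_transpose, hsym]
      simp only [mulVec_add, mulVec_smul, dotProduct_add, add_dotProduct, smul_dotProduct,
        dotProduct_smul, smul_eq_mul, hfAu]
      simp [mulVec, dotProduct, Matrix.replicateCol, Matrix.replicateRow, Finset.sum_add_distrib, mul_add, add_mul,
        Finset.mul_sum, mul_comm, mul_left_comm]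
      rw [hs]
      have hu1 : z (Sum.inr ()) = z (Sum.inr PUnit.unit) := rfl
      rw [hu1]
      ring_nf
      have e2 : ∑ x, ∑ x_1, A x x_1 * f x_1 * u x * z (Sum.inr PUnit.unit) =
          ∑ x, ∑ x_1, z (Sum.inr PUnit.unit) * A x x_1 * f x_1 * u x :=
        Finset.sum_congr rfl fun x _ => Finset.sum_congr rfl fun x_1 _ => by ring
      rw [e2]
      ring
    rw [key]
    simpa using hA.dotProduct_mulVec_nonneg (u + s • f)

lemma bilin {n m : ℕ} (P : Matrix (Fin n) (Fin n) ℝ) (Λ : Matrix (Fin m) (Fin n) ℝ)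
    (hPsymm : P.IsSymm) (hPproj : P * P = P) (c d : ℝ) (x1 x2 : Fin n → ℝ) :
    x1 ⬝ᵥ ((c • P + d • (Λᵀ * Λ)) *ᵥ x2) =
      c * ((P *ᵥ x1) ⬝ᵥ (P *ᵥ x2)) + d * ((Λ *ᵥ x1) ⬝ᵥ (Λ *ᵥ x2)) := by
  rw [add_mulVec, dotProduct_add, smul_mulVec, smul_mulVec, dotProduct_smul,
    dotProduct_smul, smul_eq_mul, smul_eq_mul]
  congr 1
  · congr 1
    rw [← dot_transpose P x1 (P *ᵥ x2), hPsymm.eq, mulVec_mulVec, hPproj]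
  · congr 1
    rw [← mulVec_mulVec, dot_transpose]

theorem SDP_value_eq_normSq_and_attained {n m : ℕ}
    (P : Matrix (Fin n) (Fin n) ℝ) (Λ : Matrix (Fin m) (Fin n) ℝ)
    (hPsymm : P.IsSymm) (hPproj : P * P = P) (hΛ : Λ * Λᵀ = 1)
    (hker : ∀ f : Fin n → ℝ, P *ᵥ f = 0 → Λ *ᵥ f = 0 → f = 0)
    (ε η : ℝ) (hε : 0 < ε) (hη : 0 < η) (y : Fin m → ℝ)
    (cs ds : ℝ) (hcs : 0 ≤ cs) (hds : 0 ≤ ds) (fs hs : Fin n → ℝ)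
    -- (a)
    (ha : (cs • P + ds • (Λᵀ * Λ) - 1).PosSemidef)
    -- (b')
    (hb1 : cs • (P *ᵥ fs) + ds • (Λᵀ *ᵥ (Λ *ᵥ fs - y)) = 0)
    (hb2 : (cs • P + ds • (Λᵀ * Λ)) *ᵥ hs = hs)
    -- (c)
    (hc1 : eInner (P *ᵥ fs) hs = 0)
    (hc2 : eInner (Λᵀ *ᵥ (Λ *ᵥ fs - y)) hs = 0)
    -- (d)
    (hd1 : eNorm (P *ᵥ fs + P *ᵥ hs) ^ 2 = ε ^ 2)
    (hd2 : eNorm (Λ *ᵥ fs - y + Λ *ᵥ hs) ^ 2 = η ^ 2)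
    -- the SDP feasibility predicate
    (Feas : ℝ → ℝ → ℝ → Prop)
    (hFeas : ∀ c d t : ℝ, Feas c d t ↔ (0 ≤ c ∧ 0 ≤ d ∧
      (c • P + d • (Λᵀ * Λ) - 1).PosSemidef ∧
      (Matrix.fromBlocks (c • P + d • (Λᵀ * Λ))
          (Matrix.replicateCol Unit (d • (Λᵀ *ᵥ y)))
          (Matrix.replicateRow Unit (d • (Λᵀ *ᵥ y)))
          (Matrix.of fun _ _ => t)).PosSemidef)) :
    sInf {v : ℝ | ∃ c d t : ℝ, Feas c d t ∧
        v = c * ε ^ 2 + d * η ^ 2 - d * eNorm y ^ 2 + t} = eNorm hs ^ 2 ∧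
    Feas cs ds (ds * eInner (Λ *ᵥ fs) y) ∧
    cs * ε ^ 2 + ds * η ^ 2 - ds * eNorm y ^ 2 + ds * eInner (Λ *ᵥ fs) y =
      eNorm hs ^ 2 := by
  -- basic facts
  have hnhs : eNorm hs ^ 2 = hs ⬝ᵥ hs := eNorm_sq hs
  have cross1 : (P *ᵥ fs) ⬝ᵥ (P *ᵥ hs) = 0 := by
    rw [← dot_transpose P fs (P *ᵥ hs), hPsymm.eq, mulVec_mulVec, hPproj, ← hPsymm.eq,
      dot_transpose]
    exact hc1
  have cross2 : (P *ᵥ hs) ⬝ᵥ (P *ᵥ fs) = 0 := by rw [dotProduct_comm]; exact cross1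
  have a2' : (Λ *ᵥ fs - y) ⬝ᵥ (Λ *ᵥ hs) = 0 := by
    rw [dotProduct_comm, ← dot_transpose Λ hs (Λ *ᵥ fs - y), dotProduct_comm]
    exact hc2
  have a2e1 : (Λ *ᵥ fs) ⬝ᵥ (Λ *ᵥ hs) - y ⬝ᵥ (Λ *ᵥ hs) = 0 := by
    rw [← sub_dotProduct]; exact a2'
  have a2e2 : (Λ *ᵥ hs) ⬝ᵥ (Λ *ᵥ fs) - (Λ *ᵥ hs) ⬝ᵥ y = 0 := by
    rw [← dotProduct_sub, dotProduct_comm]; exact a2'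
  have hcm2 : y ⬝ᵥ (Λ *ᵥ fs) = (Λ *ᵥ fs) ⬝ᵥ y := dotProduct_comm _ _
  have ht : ∀ d : ℝ, (d • (Λᵀ *ᵥ y)) ⬝ᵥ fs = d * ((Λ *ᵥ fs) ⬝ᵥ y) := by
    intro d
    rw [smul_dotProduct, smul_eq_mul, dotProduct_comm, dot_transpose]
  -- the master value identity
  have key : ∀ c d t : ℝ, c * ε ^ 2 + d * η ^ 2 - d * eNorm y ^ 2 + t =
      (fs ⬝ᵥ ((c • P + d • (Λᵀ * Λ)) *ᵥ fs) - 2 * ((d • (Λᵀ *ᵥ y)) ⬝ᵥ fs) + t)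
        + hs ⬝ᵥ ((c • P + d • (Λᵀ * Λ)) *ᵥ hs) := by
    intro c d t
    rw [← hd1, ← hd2, eNorm_sq, eNorm_sq, eNorm_sq, bilin P Λ hPsymm hPproj,
      bilin P Λ hPsymm hPproj, ht d]
    simp only [add_dotProduct, dotProduct_add, sub_dotProduct, dotProduct_sub]
    linear_combination c * cross1 + c * cross2 + d * a2e1 + d * a2e2 - d * hcm2
  -- the feasible point
  have hAs : (cs • P + ds • (Λᵀ * Λ)).PosSemidef := by
    have := ha.add Matrix.PosSemidef.one
    rwa [sub_add_cancel] at this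
  have hbfs : (cs • P + ds • (Λᵀ * Λ)) *ᵥ fs = ds • (Λᵀ *ᵥ y) := by
    funext i
    have h := congrFun hb1 i
    simp only [mulVec_sub, Pi.add_apply, Pi.smul_apply, Pi.sub_apply, Pi.zero_apply,
      smul_eq_mul] at h
    simp only [add_mulVec, smul_mulVec, ← mulVec_mulVec, Pi.add_apply, Pi.smul_apply,
      smul_eq_mul]
    linarith
  have htv : fs ⬝ᵥ ((cs • P + ds • (Λᵀ * Λ)) *ᵥ fs) = ds * eInner (Λ *ᵥ fs) y := by
    rw [hbfs, dotProduct_comm, ht ds, eInner_eq]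
  have feas : Feas cs ds (ds * eInner (Λ *ᵥ fs) y) := by
    rw [hFeas]
    refine ⟨hcs, hds, ha, ?_⟩
    have hblk := block_construct _ hAs fs
    rw [htv] at hblk
    rw [hbfs] at hblk
    exact hblk
  -- the attained value
  have hval : cs * ε ^ 2 + ds * η ^ 2 - ds * eNorm y ^ 2 + ds * eInner (Λ *ᵥ fs) y =
      eNorm hs ^ 2 := by
    rw [key cs ds _, hnhs, hb2, htv, ht ds, eInner_eq]
    ring
  -- lower bound
  have hlow : ∀ v ∈ {v : ℝ | ∃ c d t : ℝ, Feas c d t ∧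
      v = c * ε ^ 2 + d * η ^ 2 - d * eNorm y ^ 2 + t}, eNorm hs ^ 2 ≤ v := by
    rintro v ⟨c, d, t, hf, rfl⟩
    rw [hFeas] at hf
    obtain ⟨hc, hd, hA1, hA2⟩ := hf
    have h1 := block_extract _ _ _ hA2 fs
    have h2 := hA1.dotProduct_mulVec_nonneg hs
    rw [star_trivial, sub_mulVec, one_mulVec, dotProduct_sub] at h2
    rw [key c d t, hnhs]
    linarith
  have hmem : eNorm hs ^ 2 ∈ {v : ℝ | ∃ c d t : ℝ, Feas c d t ∧
      v = c * ε ^ 2 + d * η ^ 2 - d * eNorm y ^ 2 + t} :=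
    ⟨cs, ds, ds * eInner (Λ *ᵥ fs) y, feas, hval.symm⟩
  refine ⟨le_antisymm (csInf_le ⟨eNorm hs ^ 2, hlow⟩ hmem) (le_csInf ⟨_, hmem⟩ hlow), feas, hval⟩
end

section
/- Let P be an n×n real symmetric matrix with P² = P, let Λ be an m×n real matrix with Λ Λᵀ = I_m, and suppose ker P ∩ ker Λ = {0}. Fix ε > 0, η > 0 and y ∈ ℝᵐ, and set K = {f ∈ ℝⁿ : ‖P f‖ ≤ ε and ‖y − Λ f‖ ≤ η}. Suppose f♯ ∈ ℝⁿ and there exist c♯, d♯ ≥ 0 and h♯ ∈ ℝⁿ such that: (a) c♯ P + d♯ ΛᵀΛ − I_n is positive semidefinite; (b) c♯ P f♯ + d♯ Λᵀ(Λ f♯ − y) + (c♯ P + d♯ ΛᵀΛ) h♯ = h♯; (c) ⟨P f♯, h♯⟩ = 0 and ⟨Λᵀ(Λ f♯ − y), h♯⟩ = 0; (d) ‖P f♯ + P h♯‖² = ε² and ‖Λ f♯ − y + Λ h♯‖² = η². Then f♯ is a Chebyshev center of K: for every z ∈ ℝⁿ, sup_{f ∈ K} ‖f − f♯‖ ≤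 sup_{f ∈ K} ‖f − z‖. -/
open Matrix

lemma dot_self_eq {k : ℕ} (x : Fin k → ℝ) : x ⬝ᵥ x = ∑ i, x i ^ 2 := by
  simp [dotProduct, sq]

lemma dot_self_nonneg {k : ℕ} (x : Fin k → ℝ) : 0 ≤ x ⬝ᵥ x := by
  rw [dot_self_eq]; exact Finset.sum_nonneg fun i _ => sq_nonneg _

lemma eNorm_eq_sqrt {k : ℕ} (x : Fin k → ℝ) : eNorm x = Real.sqrt (x ⬝ᵥ x) := by
  rw [eNorm, dot_self_eq]

lemma eNorm_le_eNorm {k : ℕ} {x y : Fin k → ℝ} (h : x ⬝ᵥ x ≤ y ⬝ᵥ y) : eNorm x ≤ eNorm y := by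
  rw [eNorm_eq_sqrt, eNorm_eq_sqrt]; exact Real.sqrt_le_sqrt h

lemma eNorm_neg {k : ℕ} (x : Fin k → ℝ) : eNorm (-x) = eNorm x := by
  simp [eNorm]

lemma eNorm_eq_of_sq_eq {k : ℕ} {x : Fin k → ℝ} {c : ℝ} (hc : 0 ≤ c)
    (h : eNorm x ^ 2 = c ^ 2) : eNorm x = c := by
  nlinarith [eNorm_nonneg x]

lemma eNorm_add_le {k : ℕ} (x y : Fin k → ℝ) : eNorm (x + y) ≤ eNorm x + eNorm y := by
  have hx : ∀ v : Fin k → ℝ, eNorm v = ‖(WithLp.equiv 2 (Fin k → ℝ)).symm v‖ := by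
    intro v; rw [EuclideanSpace.norm_eq]; simp [eNorm, sq_abs]
  rw [hx, hx, hx]
  exact norm_add_le ((WithLp.equiv 2 (Fin k → ℝ)).symm x) ((WithLp.equiv 2 (Fin k → ℝ)).symm y)

theorem sufficient_conditions_chebyshev_center {n m : ℕ}
    (P : Matrix (Fin n) (Fin n) ℝ) (Λ : Matrix (Fin m) (Fin n) ℝ)
    (hPsymm : P.IsSymm) (hPproj : P * P = P) (hΛ : Λ * Λᵀ = 1)
    (hker : ∀ f : Fin n → ℝ, P *ᵥ f = 0 → Λ *ᵥ f = 0 → f = 0)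
    (ε η : ℝ) (hε : 0 < ε) (hη : 0 < η) (y : Fin m → ℝ)
    (K : Set (Fin n → ℝ))
    (hK : K = {f : Fin n → ℝ | eNorm (P *ᵥ f) ≤ ε ∧ eNorm (y - Λ *ᵥ f) ≤ η})
    (fs : Fin n → ℝ) (cs ds : ℝ) (hcs : 0 ≤ cs) (hds : 0 ≤ ds) (hs : Fin n → ℝ)
    -- (a)
    (ha : (cs • P + ds • (Λᵀ * Λ) - 1).PosSemidef)
    -- (b)
    (hb : cs • (P *ᵥ fs) + ds • (Λᵀ *ᵥ (Λ *ᵥ fs - y)) +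
        (cs • P + ds • (Λᵀ * Λ)) *ᵥ hs = hs)
    -- (c)
    (hc1 : eInner (P *ᵥ fs) hs = 0)
    (hc2 : eInner (Λᵀ *ᵥ (Λ *ᵥ fs - y)) hs = 0)
    -- (d)
    (hd1 : eNorm (P *ᵥ fs + P *ᵥ hs) ^ 2 = ε ^ 2)
    (hd2 : eNorm (Λ *ᵥ fs - y + Λ *ᵥ hs) ^ 2 = η ^ 2) :
    ∀ z : Fin n → ℝ,
      (⨆ f : K, eNorm ((f : Fin n → ℝ) - fs)) ≤ ⨆ f : K, eNorm ((f : Fin n → ℝ) - z) := by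
  intro z
  have hc1' : (P *ᵥ fs) ⬝ᵥ hs = 0 := hc1
  have hc2' : (Λᵀ *ᵥ (Λ *ᵥ fs - y)) ⬝ᵥ hs = 0 := hc2
  have Psym : ∀ a b : Fin n → ℝ, a ⬝ᵥ (P *ᵥ b) = b ⬝ᵥ (P *ᵥ a) := by
    intro a b
    calc a ⬝ᵥ (P *ᵥ b) = (a ᵥ* P) ⬝ᵥ b := dotProduct_mulVec a P b
      _ = b ⬝ᵥ (a ᵥ* P) := dotProduct_comm _ _
      _ = b ⬝ᵥ (Pᵀ *ᵥ a) := by rw [mulVec_transpose]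
      _ = b ⬝ᵥ (P *ᵥ a) := by rw [hPsymm]
  have Λadj : ∀ (a : Fin n → ℝ) (v : Fin m → ℝ), a ⬝ᵥ (Λᵀ *ᵥ v) = (Λ *ᵥ a) ⬝ᵥ v := by
    intro a v
    rw [mulVec_transpose, dotProduct_comm, ← dotProduct_mulVec, dotProduct_comm]
  have Pidem : ∀ a b : Fin n → ℝ, (P *ᵥ a) ⬝ᵥ (P *ᵥ b) = a ⬝ᵥ (P *ᵥ b) := by
    intro a b
    calc (P *ᵥ a) ⬝ᵥ (P *ᵥ b) = b ⬝ᵥ (P *ᵥ (P *ᵥ a)) := Psym _ _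
      _ = b ⬝ᵥ ((P * P) *ᵥ a) := by rw [mulVec_mulVec]
      _ = b ⬝ᵥ (P *ᵥ a) := by rw [hPproj]
      _ = a ⬝ᵥ (P *ᵥ b) := Psym b a
  have hεsq : (P *ᵥ fs + P *ᵥ hs) ⬝ᵥ (P *ᵥ fs + P *ᵥ hs) = ε ^ 2 := by
    rw [← eNorm_sq, hd1]
  have hηsq : (Λ *ᵥ fs - y + Λ *ᵥ hs) ⬝ᵥ (Λ *ᵥ fs - y + Λ *ᵥ hs) = η ^ 2 := by
    rw [← eNorm_sq, hd2]
  have cross1 : (P *ᵥ fs) ⬝ᵥ (P *ᵥ hs) = 0 := by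
    calc (P *ᵥ fs) ⬝ᵥ (P *ᵥ hs) = fs ⬝ᵥ (P *ᵥ hs) := Pidem fs hs
      _ = hs ⬝ᵥ (P *ᵥ fs) := Psym fs hs
      _ = (P *ᵥ fs) ⬝ᵥ hs := dotProduct_comm _ _
      _ = 0 := hc1'
  have cross2 : (Λ *ᵥ fs - y) ⬝ᵥ (Λ *ᵥ hs) = 0 := by
    calc (Λ *ᵥ fs - y) ⬝ᵥ (Λ *ᵥ hs) = (Λ *ᵥ hs) ⬝ᵥ (Λ *ᵥ fs - y) := dotProduct_comm _ _
      _ = hs ⬝ᵥ (Λᵀ *ᵥ (Λ *ᵥ fs - y)) := (Λadj hs _).symm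
      _ = (Λᵀ *ᵥ (Λ *ᵥ fs - y)) ⬝ᵥ hs := dotProduct_comm _ _
      _ = 0 := hc2'
  -- fs + hs ∈ K
  have huK : fs + hs ∈ K := by
    rw [hK]
    refine ⟨?_, ?_⟩
    · have h1 : eNorm (P *ᵥ (fs + hs)) = ε := by
        apply eNorm_eq_of_sq_eq hε.le
        rw [mulVec_add]; exact hd1
      exact h1.le
    · have hv : y - Λ *ᵥ (fs + hs) = -(Λ *ᵥ fs - y + Λ *ᵥ hs) := by
        rw [mulVec_add]; abel
      have h1 : eNorm (y - Λ *ᵥ (fs + hs)) = η := by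
        apply eNorm_eq_of_sq_eq hη.le
        rw [hv, eNorm_neg]; exact hd2
      exact h1.le
  -- fs - hs ∈ K
  have hwK : fs - hs ∈ K := by
    rw [hK]
    refine ⟨?_, ?_⟩
    · have h1 : eNorm (P *ᵥ (fs - hs)) ^ 2 = ε ^ 2 := by
        rw [eNorm_sq, mulVec_sub]
        have e1 : (P *ᵥ fs - P *ᵥ hs) ⬝ᵥ (P *ᵥ fs - P *ᵥ hs)
            = (P *ᵥ fs + P *ᵥ hs) ⬝ᵥ (P *ᵥ fs + P *ᵥ hs) - 4 * ((P *ᵥ fs) ⬝ᵥ (P *ᵥ hs)) := by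
          simp only [dotProduct_add, add_dotProduct, dotProduct_sub, sub_dotProduct]
          rw [dotProduct_comm (P *ᵥ hs) (P *ᵥ fs)]; ring
        rw [e1, hεsq, cross1]; ring
      exact (eNorm_eq_of_sq_eq hε.le h1).le
    · have hv : y - Λ *ᵥ (fs - hs) = Λ *ᵥ hs - (Λ *ᵥ fs - y) := by
        rw [mulVec_sub]; abel
      have h1 : eNorm (y - Λ *ᵥ (fs - hs)) ^ 2 = η ^ 2 := by
        rw [eNorm_sq, hv]
        have e1 : (Λ *ᵥ hs - (Λ *ᵥ fs - y)) ⬝ᵥ (Λ *ᵥ hs - (Λ *ᵥ fs - y))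
            = (Λ *ᵥ fs - y + Λ *ᵥ hs) ⬝ᵥ (Λ *ᵥ fs - y + Λ *ᵥ hs)
              - 4 * ((Λ *ᵥ fs - y) ⬝ᵥ (Λ *ᵥ hs)) := by
          simp only [dotProduct_add, add_dotProduct, dotProduct_sub, sub_dotProduct]
          linarith [dotProduct_comm (Λ *ᵥ hs) (Λ *ᵥ fs), dotProduct_comm (Λ *ᵥ hs) y,
            dotProduct_comm y (Λ *ᵥ fs)]
        rw [e1, hηsq, cross2]; ring
      exact (eNorm_eq_of_sq_eq hη.le h1).le
  -- the key bound : every point of K is within eNorm hs of fs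
  have key : ∀ f ∈ K, (f - fs) ⬝ᵥ (f - fs) ≤ hs ⬝ᵥ hs := by
    intro f hfK
    rw [hK] at hfK
    obtain ⟨hf1, hf2⟩ := hfK
    obtain ⟨g, rfl⟩ : ∃ g, f = g + (fs + hs) := ⟨f - (fs + hs), by abel⟩
    have hgoal : g + (fs + hs) - fs = g + hs := by abel
    rw [hgoal]
    have hfP : (g + (fs + hs)) ⬝ᵥ (P *ᵥ (g + (fs + hs))) ≤ ε ^ 2 := by
      have h2 : eNorm (P *ᵥ (g + (fs + hs))) ^ 2 ≤ ε ^ 2 := by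
        have := eNorm_nonneg (P *ᵥ (g + (fs + hs))); nlinarith
      rw [eNorm_sq, Pidem] at h2; exact h2
    have hfΛ : (Λ *ᵥ (g + (fs + hs)) - y) ⬝ᵥ (Λ *ᵥ (g + (fs + hs)) - y) ≤ η ^ 2 := by
      have h2 : eNorm (y - Λ *ᵥ (g + (fs + hs))) ^ 2 ≤ η ^ 2 := by
        have := eNorm_nonneg (y - Λ *ᵥ (g + (fs + hs))); nlinarith
      rw [eNorm_sq] at h2
      have hv : (Λ *ᵥ (g + (fs + hs)) - y) ⬝ᵥ (Λ *ᵥ (g + (fs + hs)) - y)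
          = (y - Λ *ᵥ (g + (fs + hs))) ⬝ᵥ (y - Λ *ᵥ (g + (fs + hs))) := by
        simp only [sub_dotProduct, dotProduct_sub]
        linarith [dotProduct_comm y (Λ *ᵥ (g + (fs + hs)))]
      rw [hv]; exact h2
    have hfP' : cs * ((g + (fs + hs)) ⬝ᵥ (P *ᵥ (g + (fs + hs)))) ≤ cs * ε ^ 2 :=
      mul_le_mul_of_nonneg_left hfP hcs
    have hfΛ' : ds * ((Λ *ᵥ (g + (fs + hs)) - y) ⬝ᵥ (Λ *ᵥ (g + (fs + hs)) - y)) ≤ ds * η ^ 2 :=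
      mul_le_mul_of_nonneg_left hfΛ hds
    have hεsq' : cs * ((P *ᵥ fs + P *ᵥ hs) ⬝ᵥ (P *ᵥ fs + P *ᵥ hs)) = cs * ε ^ 2 := by
      rw [hεsq]
    have hηsq' : ds * ((Λ *ᵥ fs - y + Λ *ᵥ hs) ⬝ᵥ (Λ *ᵥ fs - y + Λ *ᵥ hs)) = ds * η ^ 2 := by
      rw [hηsq]
    have hpsd : 0 ≤ g ⬝ᵥ ((cs • P + ds • (Λᵀ * Λ) - 1) *ᵥ g) := by simpa only [star_trivial] using ha.dotProduct_mulVec_nonneg g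
    have hb' : g ⬝ᵥ (cs • (P *ᵥ fs) + ds • (Λᵀ *ᵥ (Λ *ᵥ fs - y)) +
        (cs • P + ds • (Λᵀ * Λ)) *ᵥ hs) = g ⬝ᵥ hs := by rw [hb]
    simp only [mulVec_add, mulVec_sub, add_mulVec, sub_mulVec, smul_mulVec,
      one_mulVec, ← mulVec_mulVec, dotProduct_add, add_dotProduct, dotProduct_sub,
      sub_dotProduct, dotProduct_smul, smul_dotProduct, smul_eq_mul, Λadj, Pidem]
      at hfP' hfΛ' hεsq' hηsq' hpsd hb' ⊢
    simp only [Psym fs g, Psym hs g, Psym hs fs,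
      dotProduct_comm hs g, dotProduct_comm fs g, dotProduct_comm hs fs,
      dotProduct_comm (Λ *ᵥ fs) (Λ *ᵥ g), dotProduct_comm (Λ *ᵥ hs) (Λ *ᵥ g),
      dotProduct_comm (Λ *ᵥ hs) (Λ *ᵥ fs),
      dotProduct_comm y (Λ *ᵥ g), dotProduct_comm y (Λ *ᵥ fs), dotProduct_comm y (Λ *ᵥ hs)]
      at hfP' hfΛ' hεsq' hηsq' hpsd hb' ⊢
    linarith [hfP', hfΛ', hεsq', hηsq', hpsd, hb']
  haveI : Nonempty ↥K := ⟨⟨fs + hs, huK⟩⟩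
  have upper : (⨆ f : K, eNorm ((f : Fin n → ℝ) - fs)) ≤ eNorm hs :=
    ciSup_le fun f => eNorm_le_eNorm (key f f.2)
  have hbdd : BddAbove (Set.range fun f : K => eNorm ((f : Fin n → ℝ) - z)) := by
    refine ⟨eNorm hs + eNorm (fs - z), ?_⟩
    rintro x ⟨f, rfl⟩
    have h1 : (f : Fin n → ℝ) - z = ((f : Fin n → ℝ) - fs) + (fs - z) := by abel
    calc eNorm ((f : Fin n → ℝ) - z) = eNorm (((f : Fin n → ℝ) - fs) + (fs - z)) := by rw [h1]
      _ ≤ eNorm ((f : Fin n → ℝ) - fs) + eNorm (fs - z) := eNorm_add_le _ _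
      _ ≤ eNorm hs + eNorm (fs - z) :=
          add_le_add_left (eNorm_le_eNorm (key _ f.2)) _
  have lower : eNorm hs ≤ ⨆ f : K, eNorm ((f : Fin n → ℝ) - z) := by
    have hexp : (fs + hs - z) ⬝ᵥ (fs + hs - z) + (fs - hs - z) ⬝ᵥ (fs - hs - z)
        = 2 * ((fs - z) ⬝ᵥ (fs - z)) + 2 * (hs ⬝ᵥ hs) := by
      simp only [sub_dotProduct, dotProduct_sub, add_dotProduct, dotProduct_add]
      linarith [dotProduct_comm fs hs, dotProduct_comm fs z, dotProduct_comm hs z]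
    have h0 := dot_self_nonneg (fs - z)
    rcases le_total (hs ⬝ᵥ hs) ((fs + hs - z) ⬝ᵥ (fs + hs - z)) with hcase | hcase
    · calc eNorm hs ≤ eNorm (fs + hs - z) := eNorm_le_eNorm hcase
        _ ≤ _ := le_ciSup hbdd ⟨fs + hs, huK⟩
    · have h2 : hs ⬝ᵥ hs ≤ (fs - hs - z) ⬝ᵥ (fs - hs - z) := by linarith
      calc eNorm hs ≤ eNorm (fs - hs - z) := eNorm_le_eNorm h2
        _ ≤ _ := le_ciSup hbdd ⟨fs - hs, hwK⟩
  exact le_trans upper lower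
end
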